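/- Integer division preserves the strongly Rayleigh property (Ghosh–Liggett–Pemantle): Let X be a strongly Rayleigh random variable, i.e. an integer-valued random variable with values in {0,...,n} whose probability generating function Σ_{i=0}^n P(X=i) z^i has only real roots. Then for every integer k ≥ 1, the random variable ⌊X/k⌋ is strongly Rayleigh: its probability generating function also has only real roots. -/

import Mathlib

open scoped BigOperators

open Polynomial Complex

noncomputable def hv (k : ℕ) (w : ℂ) : List ℝ → ℕ → ℂ
  | [], s => if s = 0 then 1 else 0
  | t :: L, s =>
      (if s = 0 then w * hv k w L (k-1) else hv k w L (s-1)) + (t : ℂ) * hv k w L s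

-- trivial equal-index facts
lemma im_self (z : ℂ) : (z * (starRingEnd ℂ) z).im = 0 := by
  simp [Complex.mul_conj]

lemma im_self_w (w z : ℂ) (hw : 0 < w.im) : (z * (starRingEnd ℂ) (w * z)).im ≤ 0 := by
  have : z * (starRingEnd ℂ) (w * z) = (Complex.normSq z : ℂ) * (starRingEnd ℂ) w := by
    rw [map_mul]
    rw [← Complex.mul_conj z]
    ring
  rw [this]
  simp only [Complex.im_ofReal_mul, Complex.conj_im]
  nlinarith [Complex.normSq_nonneg z]

lemma im_swap (x y : ℂ) : (x * (starRingEnd ℂ) y).im = -((y * (starRingEnd ℂ) x).im) := by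
  have : x * (starRingEnd ℂ) y = (starRingEnd ℂ) (y * (starRingEnd ℂ) x) := by
    rw [map_mul]; simp [mul_comm]
  rw [this, Complex.conj_im]

lemma helper_nonneg (t : ℝ) (ht : 0 ≤ t) (A B C D : ℂ)
    (h1 : 0 ≤ (A * (starRingEnd ℂ) C).im) (h2 : 0 ≤ (A * (starRingEnd ℂ) D).im)
    (h3 : 0 ≤ (B * (starRingEnd ℂ) C).im) (h4 : 0 ≤ (B * (starRingEnd ℂ) D).im) :
    0 ≤ ((A + (t:ℂ) * B) * (starRingEnd ℂ) (C + (t:ℂ) * D)).im := by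
  have e : (A + (t:ℂ) * B) * (starRingEnd ℂ) (C + (t:ℂ) * D)
      = A * (starRingEnd ℂ) C + (t:ℂ) * (A * (starRingEnd ℂ) D)
        + (t:ℂ) * (B * (starRingEnd ℂ) C) + (t:ℂ)^2 * (B * (starRingEnd ℂ) D) := by
    rw [map_add, map_mul, Complex.conj_ofReal]; ring
  rw [e]
  simp only [Complex.add_im, Complex.im_ofReal_mul]
  have : ((t:ℂ)^2 * (B * (starRingEnd ℂ) D)).im = t^2 * (B * (starRingEnd ℂ) D).im := by
    rw [show ((t:ℂ)^2) = ((t^2 : ℝ) : ℂ) by push_cast; ring, Complex.im_ofReal_mul]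
  rw [this]
  positivity

lemma helper_nonpos (t : ℝ) (ht : 0 ≤ t) (A B C D : ℂ)
    (h1 : (A * (starRingEnd ℂ) C).im ≤ 0) (h2 : (A * (starRingEnd ℂ) D).im ≤ 0)
    (h3 : (B * (starRingEnd ℂ) C).im ≤ 0) (h4 : (B * (starRingEnd ℂ) D).im ≤ 0) :
    ((A + (t:ℂ) * B) * (starRingEnd ℂ) (C + (t:ℂ) * D)).im ≤ 0 := by
  have e : (A + (t:ℂ) * B) * (starRingEnd ℂ) (C + (t:ℂ) * D)
      = A * (starRingEnd ℂ) C + (t:ℂ) * (A * (starRingEnd ℂ) D)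
        + (t:ℂ) * (B * (starRingEnd ℂ) C) + (t:ℂ)^2 * (B * (starRingEnd ℂ) D) := by
    rw [map_add, map_mul, Complex.conj_ofReal]; ring
  rw [e]
  simp only [Complex.add_im, Complex.im_ofReal_mul]
  have e2 : ((t:ℂ)^2 * (B * (starRingEnd ℂ) D)).im = t^2 * (B * (starRingEnd ℂ) D).im := by
    rw [show ((t:ℂ)^2) = ((t^2 : ℝ) : ℂ) by push_cast; ring, Complex.im_ofReal_mul]
  rw [e2]
  have := sq_nonneg t
  nlinarith

lemma im_ww (w E C : ℂ) : (w * E * (starRingEnd ℂ) (w * C)).im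
    = Complex.normSq w * (E * (starRingEnd ℂ) C).im := by
  have e : w * E * (starRingEnd ℂ) (w * C)
      = (Complex.normSq w : ℂ) * (E * (starRingEnd ℂ) C) := by
    rw [map_mul, ← Complex.mul_conj w]; ring
  rw [e, Complex.im_ofReal_mul]

lemma hv_inv (k : ℕ) (w : ℂ) (hw : 0 < w.im) (L : List ℝ) (hL : ∀ t ∈ L, 0 ≤ t) :
    ∀ s s', s ≤ s' → s' ≤ k - 1 →
      0 ≤ (hv k w L s * (starRingEnd ℂ) (hv k w L s')).im ∧
        (hv k w L s * (starRingEnd ℂ) (w * hv k w L s')).im ≤ 0 := by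
  induction L with
  | nil =>
    intro s s' hss hs'k
    rcases eq_or_lt_of_le hss with rfl | hlt
    · exact ⟨le_of_eq (im_self _).symm, im_self_w w _ hw⟩
    · have hs' : ¬ (s' = 0) := by omega
      simp [hv, hs']
  | cons t L IH =>
    have ht : 0 ≤ t := hL t (by simp)
    have hL' : ∀ u ∈ L, 0 ≤ u := fun u hu => hL u (by simp [hu])
    have IH := IH hL'
    intro s s' hss hs'k
    rcases eq_or_lt_of_le hss with rfl | hlt
    · exact ⟨le_of_eq (im_self _).symm, im_self_w w _ hw⟩
    have hs' : ¬ (s' = 0) := by omega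
    have hcons0 : hv k w (t :: L) 0 = w * hv k w L (k-1) + (t:ℂ) * hv k w L 0 := by
      simp [hv]
    have hconsS : ∀ u, ¬ (u = 0) → hv k w (t :: L) u
        = hv k w L (u-1) + (t:ℂ) * hv k w L u := by
      intro u hu; simp [hv, hu]
    have hs'k1 : s' - 1 ≤ k - 1 := le_trans (Nat.sub_le _ _) hs'k
    rcases Nat.eq_zero_or_pos s with rfl | hs1
    · -- s = 0 < s'
      rw [hcons0, hconsS s' hs']
      constructor
      · apply helper_nonneg t ht
        · rw [im_swap]
          have := (IH (s'-1) (k-1) hs'k1 le_rfl).2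
          linarith
        · rw [im_swap]
          have := (IH s' (k-1) hs'k le_rfl).2
          linarith
        · exact (IH 0 (s'-1) (Nat.zero_le _) hs'k1).1
        · exact (IH 0 s' (Nat.zero_le _) hs'k).1
      · rw [show w * (hv k w L (s'-1) + (t:ℂ) * hv k w L s')
            = w * hv k w L (s'-1) + (t:ℂ) * (w * hv k w L s') by ring]
        apply helper_nonpos t ht
        · rw [im_ww]
          have h := (IH (s'-1) (k-1) hs'k1 le_rfl).1
          have h2 : (hv k w L (k-1) * (starRingEnd ℂ) (hv k w L (s'-1))).im ≤ 0 := by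
            rw [im_swap]; linarith
          nlinarith [Complex.normSq_nonneg w]
        · rw [im_ww]
          have h := (IH s' (k-1) hs'k le_rfl).1
          have h2 : (hv k w L (k-1) * (starRingEnd ℂ) (hv k w L s')).im ≤ 0 := by
            rw [im_swap]; linarith
          nlinarith [Complex.normSq_nonneg w]
        · exact (IH 0 (s'-1) (Nat.zero_le _) hs'k1).2
        · exact (IH 0 s' (Nat.zero_le _) hs'k).2
    · -- 1 ≤ s < s'
      have hs0 : ¬ (s = 0) := by omega
      have hss1 : s - 1 ≤ s' - 1 := by omega
      have hss1' : s ≤ s' - 1 := by omega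
      have hsk : s ≤ k - 1 := le_trans (le_of_lt hlt) hs'k
      rw [hconsS s hs0, hconsS s' hs']
      constructor
      · apply helper_nonneg t ht
        · exact (IH (s-1) (s'-1) hss1 hs'k1).1
        · exact (IH (s-1) s' (by omega) hs'k).1
        · exact (IH s (s'-1) hss1' hs'k1).1
        · exact (IH s s' hss hs'k).1
      · rw [show w * (hv k w L (s'-1) + (t:ℂ) * hv k w L s')
            = w * hv k w L (s'-1) + (t:ℂ) * (w * hv k w L s') by ring]
        apply helper_nonpos t ht
        · exact (IH (s-1) (s'-1) hss1 hs'k1).2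
        · exact (IH (s-1) s' (by omega) hs'k).2
        · exact (IH s (s'-1) hss1' hs'k1).2
        · exact (IH s s' hss hs'k).2

lemma hv_eval (k : ℕ) (hk : 1 ≤ k) (w x : ℂ) (hx : x ^ k = w) (L : List ℝ) :
    ∑ s ∈ Finset.range k, x ^ s * hv k w L s = ((L.map (fun t : ℝ => x + Complex.ofReal t)).prod) := by
  obtain ⟨m, rfl⟩ : ∃ m, k = m + 1 := ⟨k - 1, by omega⟩
  induction L with
  | nil =>
    simp only [List.map_nil, List.prod_nil]
    rw [Finset.sum_eq_single 0]
    · simp [hv]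
    · intro b _ hb; simp [hv, hb]
    · intro h; simp at h
  | cons t L IH =>
    have key : ∀ s, hv (m+1) w (t :: L) s
        = (if s = 0 then w * hv (m+1) w L m else hv (m+1) w L (s-1))
          + (t:ℂ) * hv (m+1) w L s := by
      intro s; simp [hv]
    simp only [key, List.map_cons, List.prod_cons]
    rw [← IH]
    have split : ∑ s ∈ Finset.range (m+1), x ^ s *
        ((if s = 0 then w * hv (m+1) w L m else hv (m+1) w L (s-1)) + (t:ℂ) * hv (m+1) w L s)
        = (∑ s ∈ Finset.range (m+1), x ^ s *
            (if s = 0 then w * hv (m+1) w L m else hv (m+1) w L (s-1)))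
          + (t:ℂ) * ∑ s ∈ Finset.range (m+1), x ^ s * hv (m+1) w L s := by
      rw [Finset.mul_sum, ← Finset.sum_add_distrib]
      apply Finset.sum_congr rfl; intro s _; ring
    rw [split]
    have first : (∑ s ∈ Finset.range (m+1), x ^ s *
          (if s = 0 then w * hv (m+1) w L m else hv (m+1) w L (s-1)))
        = x * ∑ s ∈ Finset.range (m+1), x ^ s * hv (m+1) w L s := by
      rw [Finset.sum_range_succ' (fun s => x ^ s *
          (if s = 0 then w * hv (m+1) w L m else hv (m+1) w L (s-1)))]
      simp only [if_neg (Nat.succ_ne_zero _), if_pos rfl, pow_zero, one_mul,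
        Nat.add_sub_cancel]
      rw [Finset.sum_range_succ (fun s => x ^ s * hv (m+1) w L s)]
      rw [mul_add, Finset.mul_sum]
      have : x * (x ^ m * hv (m+1) w L m) = w * hv (m+1) w L m := by
        rw [← hx]; ring
      rw [this]
      congr 1
      apply Finset.sum_congr rfl; intro s _; ring
    rw [first]; ring

noncomputable def Ssec (k : ℕ) (w : ℂ) (s : ℕ) (p : Polynomial ℂ) : ℂ :=
  p.sum fun i a => if i % k = s then a * w ^ (i / k) else 0

lemma Ssec_eq_range (k : ℕ) (w : ℂ) (s : ℕ) (p : Polynomial ℂ) (N : ℕ)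
    (hN : p.natDegree < N) :
    Ssec k w s p = ∑ i ∈ Finset.range N, if i % k = s then p.coeff i * w ^ (i / k) else 0 := by
  exact Polynomial.sum_over_range' p
    (f := fun i a => if i % k = s then a * w ^ (i / k) else 0)
    (fun n => by simp) N hN

lemma Ssec_add (k : ℕ) (w : ℂ) (s : ℕ) (p q : Polynomial ℂ) :
    Ssec k w s (p + q) = Ssec k w s p + Ssec k w s q := by
  apply Polynomial.sum_add_index p q
    (f := fun i a => if i % k = s then a * w ^ (i / k) else 0)
    (fun n => by simp)
  intro a b₁ b₂; split <;> ring

lemma Ssec_C_mul (k : ℕ) (w : ℂ) (s : ℕ) (c : ℂ) (p : Polynomial ℂ) :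
    Ssec k w s (Polynomial.C c * p) = c * Ssec k w s p := by
  rw [← Polynomial.smul_eq_C_mul]
  unfold Ssec
  rw [Polynomial.sum_smul_index p c
    (f := fun i a => if i % k = s then a * w ^ (i / k) else 0)
    (fun n => by simp)]
  rw [Polynomial.sum_def, Polynomial.sum_def, Finset.mul_sum]
  apply Finset.sum_congr rfl
  intro i _; split <;> ring

lemma nat_succ_div_mod (k j : ℕ) (hk : 1 ≤ k) :
    (j % k = k - 1 → (j+1) / k = j / k + 1 ∧ (j+1) % k = 0) ∧
    (j % k ≠ k - 1 → (j+1) / k = j / k ∧ (j+1) % k = j % k + 1) := by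
  have h1 := Nat.div_add_mod j k
  have h3 : j % k < k := Nat.mod_lt _ (by omega)
  have hmul : k * (j / k + 1) = k * (j / k) + k := by ring
  constructor
  · intro h
    exact (Nat.div_mod_unique (a := j+1) (b := k) (c := 0) (d := j / k + 1) (by omega)).2
      ⟨by omega, by omega⟩
  · intro h
    exact (Nat.div_mod_unique (a := j+1) (b := k) (c := j % k + 1) (d := j / k) (by omega)).2
      ⟨by omega, by omega⟩

lemma Ssec_X_mul (k : ℕ) (hk : 1 ≤ k) (w : ℂ) (s : ℕ) (hs : s < k) (p : Polynomial ℂ) :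
    Ssec k w s (Polynomial.X * p)
      = if s = 0 then w * Ssec k w (k-1) p else Ssec k w (s-1) p := by
  have hdeg : (Polynomial.X * p).natDegree < p.natDegree + 1 + 1 := by
    have := Polynomial.natDegree_mul_le (p := (Polynomial.X : Polynomial ℂ)) (q := p)
    have := Polynomial.natDegree_X_le (R := ℂ)
    omega
  rw [Ssec_eq_range k w s _ (p.natDegree + 1 + 1) hdeg]
  rw [Finset.sum_range_succ']
  have h0 : (if 0 % k = s then (Polynomial.X * p).coeff 0 * w ^ (0 / k) else 0) = 0 := by
    rw [Polynomial.mul_coeff_zero]; simp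
  rw [h0, add_zero]
  by_cases hs0 : s = 0
  · subst hs0
    rw [if_pos rfl, Ssec_eq_range k w (k-1) p (p.natDegree + 1) (Nat.lt_succ_self _),
      Finset.mul_sum]
    apply Finset.sum_congr rfl
    intro j _
    rw [Polynomial.coeff_X_mul p j]
    by_cases hj : j % k = k - 1
    · have hd := (nat_succ_div_mod k j hk).1 hj
      rw [if_pos hd.2, if_pos hj, hd.1]
      ring
    · have hd := (nat_succ_div_mod k j hk).2 hj
      have : ¬ ((j+1) % k = 0) := by omega
      rw [if_neg this, if_neg hj, mul_zero]
  · rw [if_neg hs0]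
    rw [Ssec_eq_range k w (s-1) p (p.natDegree + 1) (Nat.lt_succ_self _)]
    apply Finset.sum_congr rfl
    intro j _
    rw [Polynomial.coeff_X_mul p j]
    by_cases hj : j % k = s - 1
    · have hjk : j % k ≠ k - 1 ∨ s - 1 = k - 1 := by omega
      rcases Nat.eq_or_lt_of_le (Nat.le_of_lt_succ (Nat.lt_succ_of_lt hs)) with h | h
      all_goals {
        by_cases hj2 : j % k = k - 1
        · -- then s - 1 = k - 1, so s = k, contradicting s < k unless... s ≥ 1, s < k so s-1 < k-1 unless k=1
          have hd := (nat_succ_div_mod k j hk).1 hj2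
          -- s - 1 = j % k = k - 1 means s = k: contradiction with s < k and s ≥ 1
          have : s - 1 = k - 1 := by omega
          have hcontra : False := by omega
          exact hcontra.elim
        · have hd := (nat_succ_div_mod k j hk).2 hj2
          have hcond : (j+1) % k = s := by omega
          rw [if_pos hcond, if_pos hj, hd.1] }
    · by_cases hj2 : j % k = k - 1
      · have hd := (nat_succ_div_mod k j hk).1 hj2
        have : ¬ ((j+1) % k = s) := by omega
        rw [if_neg this, if_neg hj]
      · have hd := (nat_succ_div_mod k j hk).2 hj2
        have h3 : j % k < k := Nat.mod_lt _ (by omega)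
        have : ¬ ((j+1) % k = s) := by omega
        rw [if_neg this, if_neg hj]

lemma Ssec_one (k : ℕ) (w : ℂ) (s : ℕ) :
    Ssec k w s 1 = if s = 0 then 1 else 0 := by
  rw [Ssec_eq_range k w s 1 1 (by simp)]
  rw [Finset.sum_range_one]
  simp [eq_comm]

lemma Ssec_prod (k : ℕ) (hk : 1 ≤ k) (w : ℂ) (L : List ℝ) :
    ∀ s, s < k → Ssec k w s ((L.map fun t : ℝ =>
      Polynomial.X + Polynomial.C (Complex.ofReal t)).prod) = hv k w L s := by
  induction L with
  | nil =>
    intro s hs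
    simp only [List.map_nil, List.prod_nil]
    rw [Ssec_one]
    simp [hv]
  | cons t L IH =>
    intro s hs
    simp only [List.map_cons, List.prod_cons]
    rw [add_mul, Ssec_add, Ssec_X_mul k hk w s hs, Ssec_C_mul]
    have h1 : k - 1 < k := by omega
    have h2 : s - 1 < k := by omega
    by_cases hs0 : s = 0
    · subst hs0
      rw [if_pos rfl, IH (k-1) h1, IH 0 (by omega)]
      simp [hv]
    · rw [if_neg hs0, IH (s-1) h2, IH s hs]
      simp [hv, hs0]

lemma Ssec_total (k : ℕ) (hk : 1 ≤ k) (w : ℂ) (p : Polynomial ℂ) (N : ℕ)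
    (hN : p.natDegree < N) :
    ∑ s ∈ Finset.range k, Ssec k w s p
      = ∑ i ∈ Finset.range N, p.coeff i * w ^ (i / k) := by
  have : ∀ s, s ∈ Finset.range k → Ssec k w s p
      = ∑ i ∈ Finset.range N, if i % k = s then p.coeff i * w ^ (i / k) else 0 :=
    fun s _ => Ssec_eq_range k w s p N hN
  rw [Finset.sum_congr rfl this, Finset.sum_comm]
  apply Finset.sum_congr rfl
  intro i _
  rw [Finset.sum_ite_eq (Finset.range k) (i % k) (fun _ => p.coeff i * w ^ (i / k))]
  rw [if_pos (Finset.mem_range.mpr (Nat.mod_lt _ (by omega)))]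

lemma pos_lemma (w v : ℂ) (hq : 0 < w.im) (hv : v ≠ 0) (h1 : 0 ≤ v.im)
    (h2 : (v * (starRingEnd ℂ) w).im ≤ 0) :
    0 < (v * (starRingEnd ℂ) ((‖w‖ : ℂ) + w)).re := by
  set a := v.re with ha
  set b := v.im with hb
  set p := w.re with hp
  set q := w.im with hq2
  have habs : |w.re| < ‖w‖ := Complex.abs_re_lt_norm.mpr (ne_of_gt hq)
  have hsq : p ^ 2 + q ^ 2 = (‖w‖) ^ 2 := by
    rw [Complex.sq_norm, Complex.normSq_apply]; ring
  have he : (v * (starRingEnd ℂ) ((‖w‖ : ℂ) + w)).re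
      = ‖w‖ * a + (a * p + b * q) := by
    rw [map_add, Complex.conj_ofReal]
    simp [Complex.mul_re, Complex.add_re, Complex.add_im, Complex.conj_re, Complex.conj_im,
      Complex.ofReal_re, Complex.ofReal_im]
    ring
  have h2' : b * p - a * q ≤ 0 := by
    have : (v * (starRingEnd ℂ) w).im = b * p - a * q := by
      simp [Complex.mul_im, Complex.conj_re, Complex.conj_im]; ring
    linarith [h2, le_of_eq this.symm]
  rw [he]
  have habs1 : -‖w‖ < p := by cases abs_lt.mp habs; linarith
  have habs2 : p < ‖w‖ := by cases abs_lt.mp habs; linarith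
  rcases eq_or_lt_of_le h1 with hb0 | hbpos
  · -- b = 0, so a ≠ 0 and a*q ≥ 0 gives a > 0
    have hb0' : b = 0 := hb0.symm
    have hane : a ≠ 0 := by
      intro h0
      apply hv
      apply Complex.ext <;> simp [← ha, ← hb, h0, ← hb0']
    have hapos : 0 < a := by
      rcases lt_or_gt_of_ne hane with h | h
      · exfalso; nlinarith
      · exact h
    rw [hb0']
    nlinarith
  · -- b > 0
    have key : q * (‖w‖ * a + (a * p + b * q)) > 0 := by
      have e1 : a * q ≥ b * p := by linarith
      have e2 : 0 < ‖w‖ + p := by linarith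
      have e3 : a * q * (‖w‖ + p) ≥ b * p * (‖w‖ + p) := by
        apply mul_le_mul_of_nonneg_right e1 (le_of_lt e2)
      have e4 : b * p * (‖w‖ + p) + b * q * q
          = b * (p * ‖w‖ + (p^2 + q^2)) := by ring
      have e5 : b * (p * ‖w‖ + (p^2+q^2)) = b * ‖w‖ * (p + ‖w‖) := by
        rw [hsq]; ring
      have hw0 : w ≠ 0 := by
        intro h0
        have : q = 0 := by rw [hq2, h0]; simp
        linarith
      have e6 : 0 < b * ‖w‖ * (p + ‖w‖) := by
        apply mul_pos (mul_pos hbpos (norm_pos_iff.mpr hw0)) (by linarith)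
      nlinarith
    nlinarith

/-- A real polynomial has only real roots: every complex root has zero imaginary part. -/
def RealRooted (f : Polynomial ℝ) : Prop :=
  ∀ z : ℂ, (f.map (algebraMap ℝ ℂ)).IsRoot z → z.im = 0


lemma key_lemma (n : ℕ) (f : ℕ → ℝ) (hf0 : ∀ i, 0 ≤ f i)
    (hsum : ∑ i ∈ Finset.range (n + 1), f i = 1)
    (hSR : RealRooted (∑ i ∈ Finset.range (n + 1), Polynomial.C (f i) * Polynomial.X ^ i))
    (k : ℕ) (hk : 1 ≤ k) (w : ℂ) (hw : 0 < w.im) :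
    ∑ j ∈ Finset.range (n / k + 1),
      Complex.ofReal (∑ i ∈ (Finset.range (n + 1)).filter (fun i => i / k = j), f i) * w ^ j
      ≠ 0 := by
  set F : Polynomial ℝ := ∑ i ∈ Finset.range (n + 1), Polynomial.C (f i) * Polynomial.X ^ i
    with hF
  -- coefficients of F
  have coeffF : ∀ m, F.coeff m = if m < n + 1 then f m else 0 := by
    intro m
    rw [hF, Polynomial.finset_sum_coeff]
    simp only [Polynomial.coeff_C_mul, Polynomial.coeff_X_pow, mul_ite, mul_one, mul_zero]
    rw [Finset.sum_ite_eq (Finset.range (n+1)) m f]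
    simp [Finset.mem_range]
  have hdegF : F.natDegree ≤ n := by
    rw [Polynomial.natDegree_le_iff_coeff_eq_zero]
    intro m hm
    rw [coeffF m, if_neg (by omega)]
  have hFeval1 : F.eval 1 = 1 := by
    rw [hF, Polynomial.eval_finset_sum]
    simpa using hsum
  have hFne : F ≠ 0 := by
    intro h; rw [h] at hFeval1; simp at hFeval1
  set Fc : Polynomial ℂ := F.map (algebraMap ℝ ℂ) with hFc
  have hFcne : Fc ≠ 0 := by
    rw [hFc, Ne, Polynomial.map_eq_zero_iff (algebraMap ℝ ℂ).injective]
    exact hFne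
  set c : ℂ := Fc.leadingCoeff with hc
  have hcne : c ≠ 0 := by
    rw [hc, Ne, Polynomial.leadingCoeff_eq_zero]; exact hFcne
  have hsplit : Fc = Polynomial.C c * (Fc.roots.map fun a => Polynomial.X - Polynomial.C a).prod :=
    (IsAlgClosed.splits Fc).eq_prod_roots
  -- roots are real and nonpositive
  have hroots : ∀ z ∈ Fc.roots, z.im = 0 ∧ z.re ≤ 0 := by
    intro z hz
    have hzroot : Fc.IsRoot z := (Polynomial.mem_roots hFcne).mp hz
    have him : z.im = 0 := hSR z hzroot
    refine ⟨him, ?_⟩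
    have hzre : z = Complex.ofReal z.re := by
      apply Complex.ext <;> simp [him]
    have hreal : F.eval z.re = 0 := by
      have : Fc.eval (Complex.ofReal z.re) = 0 := by
        rw [← hzre]; exact hzroot
      rw [hFc, Polynomial.eval_map] at this
      have h2 : Polynomial.eval₂ (algebraMap ℝ ℂ) ((Complex.ofReal) z.re) F
          = (algebraMap ℝ ℂ) (F.eval z.re) := Polynomial.eval₂_at_apply (algebraMap ℝ ℂ) z.re
      rw [h2] at this
      exact (map_eq_zero_iff (algebraMap ℝ ℂ) (algebraMap ℝ ℂ).injective).mp this
    by_contra hpos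
    push_neg at hpos
    have hevalpos : 0 < F.eval z.re := by
      rw [hF, Polynomial.eval_finset_sum]
      simp only [Polynomial.eval_mul, Polynomial.eval_C, Polynomial.eval_pow, Polynomial.eval_X]
      apply Finset.sum_pos'
      · intro i _
        exact mul_nonneg (hf0 i) (le_of_lt (pow_pos hpos i))
      · obtain ⟨i0, hi0mem, hi0⟩ := Finset.exists_ne_zero_of_sum_ne_zero
          (by rw [hsum]; norm_num : ∑ i ∈ Finset.range (n + 1), f i ≠ 0)
        exact ⟨i0, hi0mem, mul_pos (lt_of_le_of_ne (hf0 i0) (Ne.symm hi0)) (pow_pos hpos i0)⟩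
    rw [hreal] at hevalpos
    exact lt_irrefl 0 hevalpos
  -- the list of negated roots
  set M : Multiset ℝ := Fc.roots.map (fun z => -z.re) with hM
  set L : List ℝ := M.toList with hL
  have hLnn : ∀ t ∈ L, (0:ℝ) ≤ t := by
    intro t ht
    rw [hL, Multiset.mem_toList, hM, Multiset.mem_map] at ht
    obtain ⟨z, hz, rfl⟩ := ht
    have := (hroots z hz).2
    linarith
  have hprodM : (M.map fun t : ℝ => Polynomial.X + Polynomial.C (Complex.ofReal t)).prod
      = (Fc.roots.map fun a => Polynomial.X - Polynomial.C a).prod := by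
    rw [hM, Multiset.map_map]
    apply congrArg
    apply Multiset.map_congr rfl
    intro z hz
    have him := (hroots z hz).1
    have hzre : Complex.ofReal (-(z.re)) = -z := by
      apply Complex.ext <;> simp [him]
    simp only [Function.comp_apply, hzre, map_neg, sub_eq_add_neg]
  have hprodL : ((L.map fun t : ℝ => Polynomial.X + Polynomial.C (Complex.ofReal t)).prod)
      = (M.map fun t : ℝ => Polynomial.X + Polynomial.C (Complex.ofReal t)).prod := by
    conv_rhs => rw [← Multiset.coe_toList M]
    rw [Multiset.map_coe, Multiset.prod_coe, hL]
  have hFcL : Fc = Polynomial.C c *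
      ((L.map fun t : ℝ => Polynomial.X + Polynomial.C (Complex.ofReal t)).prod) := by
    rw [hprodL, hprodM]; exact hsplit
  classical
  -- sections of Fc in terms of hv
  have hSect : ∀ s, s < k → Ssec k w s Fc = c * hv k w L s := by
    intro s hs
    rw [hFcL, Ssec_C_mul, Ssec_prod k hk w L s hs]
  -- a k-th root of w
  have hwne : w ≠ 0 := by
    intro h0; rw [h0] at hw; simp at hw
  set x : ℂ := Complex.exp (Complex.log w / k) with hx
  have hxk : x ^ k = w := by
    rw [hx, ← Complex.exp_nat_mul]
    have hkc : (k:ℂ) ≠ 0 := Nat.cast_ne_zero.mpr (by omega)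
    have : (k:ℂ) * (Complex.log w / k) = Complex.log w := by
      field_simp
    rw [this, Complex.exp_log hwne]
  have hxim : x.im ≠ 0 := by
    intro h
    have hxre : x = Complex.ofReal x.re := by
      apply Complex.ext
      · simp
      · simp [h]
    have : w.im = 0 := by
      rw [← hxk, hxre]
      simp [← Complex.ofReal_pow]
    linarith
  have hprodne : ((L.map fun t : ℝ => x + Complex.ofReal t).prod) ≠ 0 := by
    apply List.prod_ne_zero
    intro hmem
    rw [List.mem_map] at hmem
    obtain ⟨t, _, ht⟩ := hmem
    have : (x + Complex.ofReal t).im = x.im := by simp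
    rw [ht] at this
    simp at this
    exact hxim this.symm
  have hxsum : ∑ s ∈ Finset.range k, x ^ s * hv k w L s ≠ 0 := by
    rw [hv_eval k hk w x hxk L]
    exact hprodne
  have hex : ∃ s ∈ Finset.range k, hv k w L s ≠ 0 := by
    by_contra hcon
    push_neg at hcon
    exact hxsum (Finset.sum_eq_zero (fun s hs => by rw [hcon s hs, mul_zero]))
  set Sf := (Finset.range k).filter (fun s => hv k w L s ≠ 0) with hSf
  have hSfne : Sf.Nonempty := by
    obtain ⟨s0, hs0, hs0ne⟩ := hex
    exact ⟨s0, Finset.mem_filter.mpr ⟨hs0, hs0ne⟩⟩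
  set s1 := Sf.max' hSfne with hs1def
  have hs1mem := Sf.max'_mem hSfne
  have hs1ne : hv k w L s1 ≠ 0 := (Finset.mem_filter.mp hs1mem).2
  have hs1k : s1 < k := Finset.mem_range.mp (Finset.mem_filter.mp hs1mem).1
  have INV := hv_inv k w hw L hLnn
  set u : ℂ := hv k w L s1 with hu
  set m0 : ℂ := (‖w‖ : ℂ) + w with hm0
  have hterm : ∀ s, s ∈ Finset.range k →
      0 ≤ (hv k w L s * ((starRingEnd ℂ) u * (starRingEnd ℂ) m0)).re := by
    intro s hs
    by_cases h0 : hv k w L s = 0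
    · rw [h0, zero_mul]; simp
    · have hsle : s ≤ s1 := Finset.le_max' Sf s (Finset.mem_filter.mpr ⟨hs, h0⟩)
      have hinv := INV s s1 hsle (by omega)
      have hvne : hv k w L s * (starRingEnd ℂ) u ≠ 0 := by
        apply mul_ne_zero h0
        rw [starRingEnd_apply, star_ne_zero]
        exact hs1ne
      have h2 : ((hv k w L s * (starRingEnd ℂ) u) * (starRingEnd ℂ) w).im ≤ 0 := by
        have e : (hv k w L s * (starRingEnd ℂ) u) * (starRingEnd ℂ) w
            = hv k w L s * (starRingEnd ℂ) (w * u) := by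
          rw [map_mul]; ring
        rw [e]; exact hinv.2
      have := pos_lemma w (hv k w L s * (starRingEnd ℂ) u) hw hvne hinv.1 h2
      rw [hm0]
      calc (0:ℝ) ≤ ((hv k w L s * (starRingEnd ℂ) u) *
          (starRingEnd ℂ) ((‖w‖ : ℂ) + w)).re := le_of_lt this
        _ = (hv k w L s * ((starRingEnd ℂ) u *
            (starRingEnd ℂ) ((‖w‖ : ℂ) + w))).re := by rw [mul_assoc]
  have hterm1 : 0 < (hv k w L s1 * ((starRingEnd ℂ) u * (starRingEnd ℂ) m0)).re := by
    have hinv := INV s1 s1 le_rfl (by omega)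
    have hvne : hv k w L s1 * (starRingEnd ℂ) u ≠ 0 := by
      apply mul_ne_zero hs1ne
      rw [starRingEnd_apply, star_ne_zero]
      exact hs1ne
    have h2 : ((hv k w L s1 * (starRingEnd ℂ) u) * (starRingEnd ℂ) w).im ≤ 0 := by
      have e : (hv k w L s1 * (starRingEnd ℂ) u) * (starRingEnd ℂ) w
          = hv k w L s1 * (starRingEnd ℂ) (w * u) := by
        rw [map_mul]; ring
      rw [e]; exact hinv.2
    have := pos_lemma w (hv k w L s1 * (starRingEnd ℂ) u) hw hvne hinv.1 h2
    rw [hm0, ← mul_assoc]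
    exact this
  have hTpos : 0 < (∑ s ∈ Finset.range k,
      hv k w L s * ((starRingEnd ℂ) u * (starRingEnd ℂ) m0)).re := by
    rw [Complex.re_sum]
    exact Finset.sum_pos' hterm ⟨s1, (Finset.mem_filter.mp hs1mem).1, hterm1⟩
  have hT : (∑ s ∈ Finset.range k, hv k w L s) ≠ 0 := by
    intro h
    rw [← Finset.sum_mul, h, zero_mul] at hTpos
    simp at hTpos
  -- put it together
  have hmaps : ∀ i ∈ Finset.range (n+1), i / k ∈ Finset.range (n / k + 1) := by
    intro i hi
    rw [Finset.mem_range] at hi ⊢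
    exact Nat.lt_succ_of_le (Nat.div_le_div_right (Nat.le_of_lt_succ hi))
  have e1 : ∑ j ∈ Finset.range (n / k + 1),
      Complex.ofReal (∑ i ∈ (Finset.range (n + 1)).filter (fun i => i / k = j), f i) * w ^ j
      = ∑ i ∈ Finset.range (n+1), Complex.ofReal (f i) * w ^ (i / k) := by
    rw [← Finset.sum_fiberwise_of_maps_to hmaps (fun i => Complex.ofReal (f i) * w ^ (i / k))]
    apply Finset.sum_congr rfl
    intro j _
    push_cast
    rw [Finset.sum_mul]
    apply Finset.sum_congr rfl
    intro i hi
    rw [(Finset.mem_filter.mp hi).2]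
  have e2 : ∑ i ∈ Finset.range (n+1), Complex.ofReal (f i) * w ^ (i / k)
      = ∑ i ∈ Finset.range (n+1), Fc.coeff i * w ^ (i / k) := by
    apply Finset.sum_congr rfl
    intro i hi
    rw [hFc, Polynomial.coeff_map, coeffF i, if_pos (Finset.mem_range.mp hi)]
    rfl
  have e3 : ∑ i ∈ Finset.range (n+1), Fc.coeff i * w ^ (i / k)
      = ∑ s ∈ Finset.range k, Ssec k w s Fc := by
    refine (Ssec_total k hk w Fc (n+1) ?_).symm
    have hdc : Fc.natDegree ≤ n := by
      rw [hFc]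
      exact le_trans (Polynomial.natDegree_map_le (f := algebraMap ℝ ℂ) (p := F)) hdegF
    omega
  have e4 : ∑ s ∈ Finset.range k, Ssec k w s Fc = c * ∑ s ∈ Finset.range k, hv k w L s := by
    rw [Finset.mul_sum]
    apply Finset.sum_congr rfl
    intro s hs
    exact hSect s (Finset.mem_range.mp hs)
  rw [e1, e2, e3, e4]
  exact mul_ne_zero hcne hT

/-- Integer division preserves the strongly Rayleigh property (Ghosh–Liggett–Pemantle):
if `X` is an integer-valued random variable with values in `{0, ..., n}`, with pmf `f`,
whose probability generating function `Σ_{i=0}^n P(X = i) z^i` has only real roots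
(i.e. `X` is strongly Rayleigh), then for every `k ≥ 1` the probability generating
function of `⌊X/k⌋` also has only real roots. -/
theorem ghosh_liggett_pemantle_floor_div (n : ℕ) (f : ℕ → ℝ)
    (hf0 : ∀ i, 0 ≤ f i) (hsupp : ∀ i, n < i → f i = 0)
    (hsum : ∑ i ∈ Finset.range (n + 1), f i = 1)
    (hSR : RealRooted (∑ i ∈ Finset.range (n + 1), Polynomial.C (f i) * Polynomial.X ^ i))
    (k : ℕ) (hk : 1 ≤ k) :
    RealRooted (∑ j ∈ Finset.range (n / k + 1),
      Polynomial.C (∑ i ∈ (Finset.range (n + 1)).filter fun i => i / k = j, f i) *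
        Polynomial.X ^ j) := by
  intro z hz
  set b : ℕ → ℝ := fun j => ∑ i ∈ (Finset.range (n + 1)).filter (fun i => i / k = j), f i
    with hb
  have EQ : ∑ j ∈ Finset.range (n / k + 1), Complex.ofReal (b j) * z ^ j = 0 := by
    have h1 : (Polynomial.map (algebraMap ℝ ℂ)
        (∑ j ∈ Finset.range (n / k + 1), Polynomial.C (b j) * Polynomial.X ^ j)).eval z
        = ∑ j ∈ Finset.range (n / k + 1), Complex.ofReal (b j) * z ^ j := by
      rw [Polynomial.map_sum, Polynomial.eval_finset_sum]
      apply Finset.sum_congr rfl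
      intro j _
      simp
    rw [← h1]
    exact hz
  by_contra hne
  rcases lt_or_gt_of_ne hne with hlt | hgt
  · -- z.im < 0 : use the conjugate
    have hconj : ∑ j ∈ Finset.range (n / k + 1),
        Complex.ofReal (b j) * ((starRingEnd ℂ) z) ^ j = 0 := by
      have : ∑ j ∈ Finset.range (n / k + 1), Complex.ofReal (b j) * ((starRingEnd ℂ) z) ^ j
          = (starRingEnd ℂ) (∑ j ∈ Finset.range (n / k + 1), Complex.ofReal (b j) * z ^ j) := by
        rw [map_sum]
        apply Finset.sum_congr rfl
        intro j _
        rw [map_mul, map_pow, Complex.conj_ofReal]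
      rw [this, EQ, map_zero]
    exact key_lemma n f hf0 hsum hSR k hk ((starRingEnd ℂ) z)
      (by rw [Complex.conj_im]; linarith) hconj
  · exact key_lemma n f hf0 hsum hSR k hk z hgt EQ
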